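/- Assume c_f := min_{1≤j≤d} ‖f‖_{H^{-1}(Ω_j)} > 0. Then there exists a sequence of linear subspaces V_n ⊂ H^1_0(Ω) with dim V_n = n and a sequence ε_n → 0 such that ‖u(y) − P_{V_n} u(y)‖_{H^1_0} ≤ ε_n ‖u(y)‖_{H^1_0} for all y ∈ (0,∞]^d, where P_{V_n} is the H^1_0(Ω)-orthogonal projector onto V_n. -/

import Mathlib

open scoped BigOperators ENNReal InnerProductSpace
open Filter
open scoped Topology
set_option linter.unusedSectionVars false
set_option maxHeartbeats 1000000
set_option synthInstance.maxHeartbeats 400000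

noncomputable section

variable {V : Type*} [NormedAddCommGroup V] [InnerProductSpace ℝ V] [CompleteSpace V]

/-- The closed subspace `V_S` of functions whose gradient vanishes on `Ω_j` for all `j ∈ S`,
encoded through the local Dirichlet forms `B j v w = ∫_{Ω_j} ∇v·∇w`. -/
def VS {d : ℕ} (B : Fin d → V →L[ℝ] V →L[ℝ] ℝ) (S : Set (Fin d)) : Submodule ℝ V where
  carrier := {v | ∀ j ∈ S, B j v = 0}
  add_mem' := by
    intro a b ha hb j hj
    simp only [Set.mem_setOf_eq] at *
    simp [map_add, ha j hj, hb j hj]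
  zero_mem' := by intro j hj; simp
  smul_mem' := by
    intro c a ha j hj
    simp only [Set.mem_setOf_eq] at *
    simp [map_smul, ha j hj]

/-- The parametric energy bilinear form `a_y(v,w) = Σ_j y_j ∫_{Ω_j} ∇v·∇w`. -/
def aForm {d : ℕ} (B : Fin d → V →L[ℝ] V →L[ℝ] ℝ) (y : Fin d → ℝ) (v w : V) : ℝ :=
  ∑ j, y j * B j v w

/-- The parametric energy norm `‖v‖_y`. -/
def eNorm {d : ℕ} (B : Fin d → V →L[ℝ] V →L[ℝ] ℝ) (y : Fin d → ℝ) (v : V) : ℝ :=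
  Real.sqrt (aForm B y v v)

/-- `u` is the weak solution of the diffusion problem with (finite) parameter `y`. -/
def IsWeakSol {d : ℕ} (B : Fin d → V →L[ℝ] V →L[ℝ] ℝ) (f : V →L[ℝ] ℝ)
    (y : Fin d → ℝ) (u : V) : Prop :=
  ∀ v : V, aForm B y u v = f v

/-- `u` is the (possibly stiff-limit) solution for an extended parameter `y ∈ (0,∞]^d`:
on the set `S = {j | y j = ∞}` of infinite entries, `u ∈ V_S` and `u` solves the
limit variational problem over `V_S`. -/
def IsSolE {d : ℕ} (B : Fin d → V →L[ℝ] V →L[ℝ] ℝ) (f : V →L[ℝ] ℝ)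
    (y : Fin d → ℝ≥0∞) (u : V) : Prop :=
  u ∈ VS B {j | y j = ∞} ∧
  ∀ v ∈ VS B {j | y j = ∞}, ∑ j, (y j).toReal * B j u v = f v

/-- `p` is the `H^1_0`-orthogonal projection of `u` onto `K`. -/
def IsOrthProj (K : Submodule ℝ V) (u p : V) : Prop :=
  p ∈ K ∧ ∀ w ∈ K, ⟪u - p, w⟫_ℝ = 0

/-- `p` is the Galerkin projection of `u` onto `K` for the energy inner product `⟨·,·⟩_y`. -/
def IsGalProj {d : ℕ} (B : Fin d → V →L[ℝ] V →L[ℝ] ℝ) (y : Fin d → ℝ)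
    (K : Submodule ℝ V) (u p : V) : Prop :=
  p ∈ K ∧ ∀ w ∈ K, aForm B y (u - p) w = 0

/-- Galerkin projection for an extended parameter `y ∈ (0,∞]^d` (the energy inner
product being restricted to the finite components of `y`). -/
def IsGalProjE {d : ℕ} (B : Fin d → V →L[ℝ] V →L[ℝ] ℝ) (y : Fin d → ℝ≥0∞)
    (K : Submodule ℝ V) (u p : V) : Prop :=
  p ∈ K ∧ ∀ w ∈ K, ∑ j, (y j).toReal * B j (u - p) w = 0

/-- The finite set of multi-indices `ν ∈ ℕ^d` of total degree `|ν| ≤ k`. -/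
def mIdx (d k : ℕ) : Finset (Fin d → ℕ) :=
  (Fintype.piFinset fun _ : Fin d => Finset.range (k+1)).filter fun ν => ∑ j, ν j ≤ k

/-- The monomial `y^ν`. -/
def mono {d : ℕ} (y : Fin d → ℝ) (ν : Fin d → ℕ) : ℝ := ∏ j, y j ^ ν j

namespace S4Aux
variable {d : ℕ}
def coefQ (z : Fin d → ℝ) (j : Fin d) : ℝ := if z j = 0 then 0 else (z j)⁻¹
def aQ (B : Fin d → V →L[ℝ] V →L[ℝ] ℝ) (z : Fin d → ℝ) : V →L[ℝ] V →L[ℝ] ℝ :=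
  ∑ j, coefQ z j • B j
lemma aQ_apply (B : Fin d → V →L[ℝ] V →L[ℝ] ℝ) (z : Fin d → ℝ) (v w : V) :
    aQ B z v w = ∑ j, coefQ z j * B j v w := by
  simp [aQ, ContinuousLinearMap.sum_apply, smul_eq_mul]
def SolQ (B : Fin d → V →L[ℝ] V →L[ℝ] ℝ) (f : V →L[ℝ] ℝ) (z : Fin d → ℝ) (u : V) : Prop :=
  u ∈ VS B {j | z j = 0} ∧ ∀ v ∈ VS B {j | z j = 0}, aQ B z u v = f v

section hyps
variable {B : Fin d → V →L[ℝ] V →L[ℝ] ℝ}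
  (hsymm : ∀ (j : Fin d) (v w : V), B j v w = B j w v)
  (hnonneg : ∀ (j : Fin d) (v : V), 0 ≤ B j v v)
  (hsum : ∀ v w : V, ∑ j, B j v w = ⟪v, w⟫_ℝ)

-- from chunk1 (proved):
include hsymm hnonneg in
lemma cs (j : Fin d) (v w : V) : (B j v w) ^ 2 ≤ B j v v * B j w w := by
  have h := discrim_le_zero (a := B j w w) (b := 2 * B j v w) (c := B j v v) ?_
  · rw [discrim] at h; nlinarith [h]
  · intro x
    have h0 := hnonneg j (v + x • w)
    have : B j (v + x • w) (v + x • w)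
        = B j w w * (x * x) + (2 * B j v w) * x + B j v v := by
      simp only [map_add, map_smul, ContinuousLinearMap.add_apply, ContinuousLinearMap.smul_apply,
        smul_eq_mul]
      rw [hsymm j w v]
      ring
    linarith [this ▸ h0]

include hsymm hnonneg in
lemma diag_zero (j : Fin d) (v : V) (h : B j v v = 0) : B j v = 0 := by
  ext w
  have := cs hsymm hnonneg j v w
  rw [h, zero_mul] at this
  have : B j v w = 0 := by nlinarith [this]
  simpa using this

include hsum in
lemma norm_sq_eq (v : V) : ‖v‖ ^ 2 = ∑ j, B j v v := by
  rw [hsum v v, real_inner_self_eq_norm_sq]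

lemma mem_VS_iff {S : Set (Fin d)} {v : V} : v ∈ VS B S ↔ ∀ j ∈ S, B j v = 0 := Iff.rfl

include hsymm hnonneg in
lemma mem_VS_of_diag {S : Set (Fin d)} {v : V} (h : ∀ j ∈ S, B j v v = 0) : v ∈ VS B S :=
  fun j hj => diag_zero hsymm hnonneg j v (h j hj)

-- new material
lemma coefQ_nonneg {z : Fin d → ℝ} (hz : ∀ j, 0 ≤ z j) (j : Fin d) : 0 ≤ coefQ z j := by
  unfold coefQ; split
  · exact le_refl 0
  · exact inv_nonneg.mpr (hz j)

include hsymm in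
lemma aQ_symm (z : Fin d → ℝ) (v w : V) : aQ B z v w = aQ B z w v := by
  rw [aQ_apply, aQ_apply]
  exact Finset.sum_congr rfl fun j _ => by rw [hsymm j v w]

include hnonneg in
lemma aQ_nonneg {z : Fin d → ℝ} (hz : ∀ j, 0 ≤ z j) (v : V) : 0 ≤ aQ B z v v := by
  rw [aQ_apply]
  exact Finset.sum_nonneg fun j _ => mul_nonneg (coefQ_nonneg hz j) (hnonneg j v)

include hnonneg hsum in
lemma coercive_bound {z : Fin d → ℝ} {C : ℝ} (hC : 0 < C)
    (hz : ∀ j, 0 ≤ z j) (hzC : ∀ j, z j ≤ C)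
    {v : V} (hv : v ∈ VS B {j | z j = 0}) : ‖v‖ ^ 2 ≤ C * aQ B z v v := by
  rw [norm_sq_eq hsum v, aQ_apply, Finset.mul_sum]
  refine Finset.sum_le_sum fun j _ => ?_
  by_cases h : z j = 0
  · have : B j v v = 0 := by rw [hv j h]; simp
    simp [this]
  · have hzj : 0 < z j := lt_of_le_of_ne (hz j) (Ne.symm h)
    have hcoef : coefQ z j = (z j)⁻¹ := if_neg h
    have h1 : (1 : ℝ) ≤ C * (z j)⁻¹ := by
      rw [← div_eq_mul_inv]
      exact (one_le_div hzj).mpr (hzC j)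
    calc B j v v = 1 * B j v v := (one_mul _).symm
      _ ≤ C * (z j)⁻¹ * B j v v := by
          exact mul_le_mul_of_nonneg_right h1 (hnonneg j v)
      _ = C * (coefQ z j * B j v v) := by rw [hcoef]; ring

lemma isClosed_VS (S : Set (Fin d)) : IsClosed ((VS B S : Submodule ℝ V) : Set V) := by
  have : ((VS B S : Submodule ℝ V) : Set V) = ⋂ (j : Fin d) (_ : j ∈ S), (B j) ⁻¹' {0} := by
    ext v
    simp [VS, Set.mem_iInter]
  rw [this]
  exact isClosed_iInter fun j => isClosed_iInter fun _ =>
    IsClosed.preimage (B j).continuous isClosed_singleton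

include hsymm hnonneg hsum in
lemma exists_solQ (f : V →L[ℝ] ℝ) {z : Fin d → ℝ} {C : ℝ} (hC : 0 < C)
    (hz : ∀ j, 0 ≤ z j) (hzC : ∀ j, z j ≤ C) : ∃ u, SolQ B f z u := by
  set K : Submodule ℝ V := VS B {j | z j = 0} with hK
  haveI : CompleteSpace K := (isClosed_VS (B := B) _).completeSpace_coe
  set A : K →L[ℝ] K →L[ℝ] ℝ := (((aQ B z).comp K.subtypeL).flip.comp K.subtypeL) with hA
  have hA_apply : ∀ v w : K, A v w = aQ B z (w : V) (v : V) := fun v w => rfl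
  have coercive : IsCoercive A := by
    refine ⟨C⁻¹, inv_pos.mpr hC, fun u => ?_⟩
    have h2 := coercive_bound hnonneg hsum (C := C) hC hz hzC u.2
    have hnorm : ‖u‖ = ‖(u : V)‖ := rfl
    rw [hA_apply, hnorm]
    have h3 := mul_le_mul_of_nonneg_left h2 (inv_pos.mpr hC).le
    rw [← mul_assoc, inv_mul_cancel₀ hC.ne', one_mul] at h3
    calc C⁻¹ * ‖(u : V)‖ * ‖(u : V)‖ = C⁻¹ * ‖(u : V)‖ ^ 2 := by ring
      _ ≤ aQ B z (u : V) (u : V) := h3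
  set u₀ : K := coercive.continuousLinearEquivOfBilin.symm
      ((InnerProductSpace.toDual ℝ K).symm (f.comp K.subtypeL)) with hu₀
  have key : ∀ w : K, A u₀ w = f (w : V) := by
    intro w
    have h1 := coercive.continuousLinearEquivOfBilin_apply u₀ w
    rw [hu₀] at h1 ⊢
    rw [ContinuousLinearEquiv.apply_symm_apply] at h1
    rw [InnerProductSpace.toDual_symm_apply] at h1
    rw [← h1]
    rfl
  refine ⟨(u₀ : V), u₀.2, fun v hv => ?_⟩
  have := key ⟨v, hv⟩
  rw [hA_apply] at this
  rw [aQ_symm hsymm] at this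
  exact this

include hsymm hnonneg hsum in
lemma solQ_unique (f : V →L[ℝ] ℝ) {z : Fin d → ℝ} (hz : ∀ j, 0 ≤ z j)
    {u1 u2 : V} (h1 : SolQ B f z u1) (h2 : SolQ B f z u2) : u1 = u2 := by
  set e := u1 - u2 with he
  have hmem : e ∈ VS B {j | z j = 0} := sub_mem h1.1 h2.1
  have hz0 : aQ B z e e = 0 := by
    have : aQ B z e e = aQ B z u1 e - aQ B z u2 e := by
      simp [he, map_sub, ContinuousLinearMap.sub_apply]
      ring
    rw [this, h1.2 e hmem, h2.2 e hmem, sub_self]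
  have hterms : ∀ j ∈ Finset.univ, coefQ z j * B j e e = 0 := by
    rw [aQ_apply] at hz0
    exact (Finset.sum_eq_zero_iff_of_nonneg fun j _ =>
      mul_nonneg (coefQ_nonneg hz j) (hnonneg j e)).mp hz0
  have hdiag : ∀ j, B j e e = 0 := by
    intro j
    by_cases h : z j = 0
    · rw [hmem j h]; simp
    · have := hterms j (Finset.mem_univ j)
      have hzj : 0 < z j := lt_of_le_of_ne (hz j) (Ne.symm h)
      rw [coefQ, if_neg h] at this
      exact (mul_eq_zero.mp this).resolve_left (by positivity)
  have : ‖e‖ ^ 2 = 0 := by rw [norm_sq_eq hsum]; exact Finset.sum_eq_zero fun j _ => hdiag j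
  have he0 : ‖e‖ = 0 := pow_eq_zero_iff (two_ne_zero) |>.mp this
  exact sub_eq_zero.mp (norm_eq_zero.mp he0)

include hsymm hnonneg in
lemma compliance_mono (f : V →L[ℝ] ℝ) {z z' : Fin d → ℝ} (hz : ∀ j, 0 ≤ z j)
    (hle : ∀ j, z j ≤ z' j) {u u' : V}
    (h1 : SolQ B f z u) (h2 : SolQ B f z' u') : f u ≤ f u' := by
  have hz' : ∀ j, 0 ≤ z' j := fun j => le_trans (hz j) (hle j)
  have hS : {j | z' j = 0} ⊆ {j | z j = 0} := by
    intro j hj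
    exact le_antisymm (by simpa [Set.mem_setOf_eq.mp hj] using hle j) (hz j)
  have humem : u ∈ VS B {j | z' j = 0} := fun j hj => h1.1 j (hS hj)
  have key : aQ B z' u u ≤ aQ B z u u := by
    rw [aQ_apply, aQ_apply]
    refine Finset.sum_le_sum fun j _ => ?_
    by_cases h : z j = 0
    · have : B j u u = 0 := by rw [h1.1 j h]; simp
      simp [this]
    · have hzj : 0 < z j := lt_of_le_of_ne (hz j) (Ne.symm h)
      have hzj' : 0 < z' j := lt_of_lt_of_le hzj (hle j)
      rw [coefQ, coefQ, if_neg h, if_neg hzj'.ne']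
      exact mul_le_mul_of_nonneg_right (inv_anti₀ hzj (hle j)) (hnonneg j u)
  have e1 : aQ B z u u = f u := h1.2 u h1.1
  have e2 : aQ B z' u' u = f u := h2.2 u humem
  have e3 : aQ B z' u' u' = f u' := h2.2 u' h2.1
  have e4 : aQ B z' u u' = f u := by rw [aQ_symm hsymm]; exact e2
  have expand : aQ B z' (u' - u) (u' - u)
      = aQ B z' u' u' - aQ B z' u' u - aQ B z' u u' + aQ B z' u u := by
    simp [map_sub, ContinuousLinearMap.sub_apply]
    ring
  have hpos := aQ_nonneg hnonneg hz' (u' - u)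
  rw [expand, e2, e3, e4] at hpos
  linarith [le_trans key (le_of_eq e1), hpos]

lemma solQ_smul (f : V →L[ℝ] ℝ) {z : Fin d → ℝ} {μ : ℝ} (hμ : 0 < μ) {u : V}
    (h : SolQ B f z u) : SolQ B f (μ • z) (μ • u) := by
  have hSet : {j | (μ • z) j = 0} = {j | z j = 0} := by
    ext j
    simp [Pi.smul_apply, smul_eq_mul, mul_eq_zero, hμ.ne']
  have hcoef : ∀ j, coefQ (μ • z) j = μ⁻¹ * coefQ z j := by
    intro j
    by_cases hz : z j = 0
    · simp [coefQ, hz, Pi.smul_apply]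
    · rw [coefQ, coefQ, if_neg hz, if_neg (by simp [Pi.smul_apply, smul_eq_mul, mul_eq_zero, hμ.ne', hz]), Pi.smul_apply, smul_eq_mul, mul_inv]
  constructor
  · rw [hSet]; exact Submodule.smul_mem _ _ h.1
  · intro v hv
    rw [hSet] at hv
    rw [aQ_apply]
    have : ∀ j, coefQ (μ • z) j * B j (μ • u) v = coefQ z j * B j u v := by
      intro j
      rw [hcoef j, map_smul]
      simp [ContinuousLinearMap.smul_apply, smul_eq_mul]
      field_simp
    rw [Finset.sum_congr rfl fun j _ => this j, ← aQ_apply]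
    exact h.2 v hv

open scoped Classical in
/-- canonical (choice) solution -/
def Phi (B : Fin d → V →L[ℝ] V →L[ℝ] ℝ) (f : V →L[ℝ] ℝ) (z : Fin d → ℝ) : V :=
  if h : ∃ u, SolQ B f z u then h.choose else 0

lemma solQ_Phi {B : Fin d → V →L[ℝ] V →L[ℝ] ℝ} {f : V →L[ℝ] ℝ} {z : Fin d → ℝ}
    (h : ∃ u, SolQ B f z u) : SolQ B f z (Phi B f z) := by
  classical
  rw [Phi, dif_pos h]
  exact h.choose_spec

/-- the sequence of parameters converging monotonically to the stiff limit `z0`. -/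
def stiffSeq (z0 : Fin d → ℝ) (t : ℕ) (j : Fin d) : ℝ :=
  if z0 j = 0 then ((t : ℝ) + 1)⁻¹ else z0 j

lemma stiffSeq_pos {z0 : Fin d → ℝ} (hz0 : ∀ j, 0 ≤ z0 j) (t : ℕ) (j : Fin d) :
    0 < stiffSeq z0 t j := by
  rw [stiffSeq]; split
  · positivity
  · exact lt_of_le_of_ne (hz0 j) (Ne.symm (by assumption))

lemma stiffSeq_le_one {z0 : Fin d → ℝ} (hz1 : ∀ j, z0 j ≤ 1) (t : ℕ) (j : Fin d) :
    stiffSeq z0 t j ≤ 1 := by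
  rw [stiffSeq]; split
  · rw [inv_le_one₀ (by positivity)]; push_cast; linarith
  · exact hz1 j

lemma mem_VS_stiff {B : Fin d → V →L[ℝ] V →L[ℝ] ℝ} {z0 : Fin d → ℝ} (hz0 : ∀ j, 0 ≤ z0 j)
    (t : ℕ) (x : V) : x ∈ VS B {j | stiffSeq z0 t j = 0} := by
  intro j hj
  simp only [Set.mem_setOf_eq] at hj
  exact absurd hj (stiffSeq_pos hz0 t j).ne'

include hnonneg in
lemma compliance_nonneg (f : V →L[ℝ] ℝ) {z : Fin d → ℝ} (hz : ∀ j, 0 ≤ z j) {u : V}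
    (h : SolQ B f z u) : 0 ≤ f u := by
  rw [← h.2 u h.1]
  exact aQ_nonneg hnonneg hz u

include hsymm hnonneg hsum in
lemma stiff_limit (f : V →L[ℝ] ℝ) {z0 : Fin d → ℝ} (hz0 : ∀ j, 0 ≤ z0 j)
    (hz1 : ∀ j, z0 j ≤ 1) :
    Tendsto (fun t : ℕ => f (Phi B f (stiffSeq z0 t))) atTop (𝓝 (f (Phi B f z0))) := by
  set v : ℕ → V := fun t => Phi B f (stiffSeq z0 t) with hv
  have hex : ∀ t : ℕ, ∃ u, SolQ B f (stiffSeq z0 t) u := fun t =>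
    exists_solQ hsymm hnonneg hsum f one_pos (fun j => (stiffSeq_pos hz0 t j).le)
      (fun j => stiffSeq_le_one hz1 t j)
  have hsol : ∀ t, SolQ B f (stiffSeq z0 t) (v t) := fun t => solQ_Phi (hex t)
  have hex0 : ∃ u, SolQ B f z0 u :=
    exists_solQ hsymm hnonneg hsum f one_pos hz0 hz1
  have hsol0 : SolQ B f z0 (Phi B f z0) := solQ_Phi hex0
  set c : ℕ → ℝ := fun t => f (v t) with hc
  -- the parameter sequence is antitone
  have hanti : ∀ t s : ℕ, t ≤ s → ∀ j, stiffSeq z0 s j ≤ stiffSeq z0 t j := by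
    intro t s hts j
    rw [stiffSeq, stiffSeq]
    split
    · apply inv_anti₀ (by positivity)
      have h1 : (t : ℝ) ≤ (s : ℝ) := Nat.cast_le.mpr hts
      linarith
    · exact le_rfl
  -- compliance values are antitone and nonneg
  have hc_anti : ∀ t s : ℕ, t ≤ s → c s ≤ c t := fun t s hts =>
    compliance_mono hsymm hnonneg f (fun j => (stiffSeq_pos hz0 s j).le)
      (hanti t s hts) (hsol s) (hsol t)
  have hc_nonneg : ∀ t, 0 ≤ c t := fun t =>
    compliance_nonneg hnonneg f (fun j => (stiffSeq_pos hz0 t j).le) (hsol t)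
  have hc_conv : Tendsto c atTop (𝓝 (⨅ t, c t)) :=
    tendsto_atTop_ciInf (antitone_nat_of_succ_le fun n => hc_anti n (n+1) (Nat.le_succ n))
      ⟨0, fun x ⟨t, ht⟩ => ht ▸ hc_nonneg t⟩
  -- key Cauchy inequality
  have key : ∀ t s : ℕ, t ≤ s → ‖v s - v t‖ ^ 2 ≤ c t - c s := by
    intro t s hts
    have hmem : ∀ x : V, x ∈ VS B {j | stiffSeq z0 t j = 0} := mem_VS_stiff hz0 t
    have hmem' : ∀ x : V, x ∈ VS B {j | stiffSeq z0 s j = 0} := mem_VS_stiff hz0 s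
    have e1 : aQ B (stiffSeq z0 t) (v t) (v s) = f (v s) := (hsol t).2 (v s) (hmem _)
    have e1' : aQ B (stiffSeq z0 t) (v s) (v t) = f (v s) := by
      rw [aQ_symm hsymm]; exact e1
    have e2 : aQ B (stiffSeq z0 t) (v t) (v t) = f (v t) := (hsol t).2 (v t) (hmem _)
    have e3 : aQ B (stiffSeq z0 s) (v s) (v s) = f (v s) := (hsol s).2 (v s) (hmem' _)
    have hcmp : aQ B (stiffSeq z0 t) (v s) (v s) ≤ aQ B (stiffSeq z0 s) (v s) (v s) := by
      rw [aQ_apply, aQ_apply]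
      refine Finset.sum_le_sum fun j _ => ?_
      have h1 := stiffSeq_pos hz0 t j
      have h2 := stiffSeq_pos hz0 s j
      rw [coefQ, coefQ, if_neg h1.ne', if_neg h2.ne']
      exact mul_le_mul_of_nonneg_right (inv_anti₀ h2 (hanti t s hts j)) (hnonneg j _)
    have expand : aQ B (stiffSeq z0 t) (v s - v t) (v s - v t)
        = aQ B (stiffSeq z0 t) (v s) (v s) - aQ B (stiffSeq z0 t) (v s) (v t)
          - aQ B (stiffSeq z0 t) (v t) (v s) + aQ B (stiffSeq z0 t) (v t) (v t) := by
      simp [map_sub, ContinuousLinearMap.sub_apply]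
      ring
    have hcb := coercive_bound hnonneg hsum one_pos (fun j => (stiffSeq_pos hz0 t j).le)
      (fun j => stiffSeq_le_one hz1 t j) (hmem (v s - v t))
    rw [one_mul] at hcb
    rw [expand, e1, e1', e2] at hcb
    calc ‖v s - v t‖ ^ 2 ≤ aQ B (stiffSeq z0 t) (v s) (v s) - f (v s) - f (v s) + f (v t) := hcb
      _ ≤ f (v s) - f (v s) - f (v s) + f (v t) := by linarith [le_trans hcmp (le_of_eq e3)]
      _ = c t - c s := by simp [hc]; ring
  -- v is Cauchy
  have hcauchy : CauchySeq v := by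
    rw [Metric.cauchySeq_iff']
    intro ε hε
    have hcC := hc_conv.cauchySeq
    rw [Metric.cauchySeq_iff'] at hcC
    obtain ⟨N, hN⟩ := hcC (ε ^ 2) (by positivity)
    refine ⟨N, fun n hn => ?_⟩
    have h1 := key N n hn
    have h2 := hN n hn
    rw [Real.dist_eq, abs_lt] at h2
    rw [dist_eq_norm]
    have : ‖v n - v N‖ ^ 2 < ε ^ 2 := lt_of_le_of_lt h1 (by linarith)
    exact lt_of_pow_lt_pow_left₀ 2 hε.le this
  obtain ⟨vstar, hvstar⟩ := cauchySeq_tendsto_of_complete hcauchy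
  -- vstar solves the limit problem
  have hmem_star : vstar ∈ VS B {j | z0 j = 0} := by
    refine mem_VS_of_diag hsymm hnonneg fun j hj => ?_
    have hj0 : z0 j = 0 := hj
    have hbound : ∀ t : ℕ, B j (v t) (v t) ≤ c 0 * ((t : ℝ) + 1)⁻¹ := by
      intro t
      have hterm : ((t : ℝ) + 1) * B j (v t) (v t) ≤ aQ B (stiffSeq z0 t) (v t) (v t) := by
        rw [aQ_apply]
        have : coefQ (stiffSeq z0 t) j * B j (v t) (v t)
            = ((t : ℝ) + 1) * B j (v t) (v t) := by
          rw [coefQ, if_neg (stiffSeq_pos hz0 t j).ne', stiffSeq, if_pos hj0, inv_inv]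
        rw [← this]
        exact Finset.single_le_sum (f := fun i => coefQ (stiffSeq z0 t) i * B i (v t) (v t))
          (fun i _ => mul_nonneg (coefQ_nonneg (fun i => (stiffSeq_pos hz0 t i).le) i)
            (hnonneg i _)) (Finset.mem_univ j)
      have heq : aQ B (stiffSeq z0 t) (v t) (v t) = c t := (hsol t).2 (v t) (hsol t).1
      have hle := le_trans hterm (le_of_eq heq)
      have h2 : c t ≤ c 0 := hc_anti 0 t (Nat.zero_le t)
      have hpos : (0:ℝ) < (t : ℝ) + 1 := by positivity
      calc B j (v t) (v t) ≤ c t / ((t:ℝ)+1) := by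
            rw [le_div_iff₀ hpos, mul_comm]; exact hle
        _ ≤ c 0 / ((t:ℝ)+1) := by gcongr
        _ = c 0 * ((t:ℝ)+1)⁻¹ := div_eq_mul_inv _ _
    have hcont : Tendsto (fun t => B j (v t) (v t)) atTop (𝓝 (B j vstar vstar)) := by
      have hcts : Continuous fun x : V => B j x x :=
        (B j).continuous₂.comp (continuous_id.prodMk continuous_id)
      exact (hcts.tendsto vstar).comp hvstar
    have hzero : Tendsto (fun t : ℕ => B j (v t) (v t)) atTop (𝓝 0) := by
      have h1 : Tendsto (fun t : ℕ => ((t : ℝ) + 1)⁻¹) atTop (𝓝 0) := by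
        simpa [one_div] using (tendsto_one_div_add_atTop_nhds_zero_nat : Tendsto (fun n : ℕ => 1 / ((n : ℝ) + 1)) atTop (𝓝 0))
      have hg : Tendsto (fun t : ℕ => c 0 * ((t : ℝ) + 1)⁻¹) atTop (𝓝 0) := by
        simpa using h1.const_mul (c 0)
      exact squeeze_zero (fun t => hnonneg j (v t)) hbound hg
    exact tendsto_nhds_unique hcont hzero
  have heq_star : ∀ w ∈ VS B {j | z0 j = 0}, aQ B z0 vstar w = f w := by
    intro w hw
    have hper : ∀ t : ℕ, aQ B z0 (v t) w = f w := by
      intro t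
      have e1 : aQ B (stiffSeq z0 t) (v t) w = f w := (hsol t).2 w (mem_VS_stiff hz0 t w)
      rw [← e1, aQ_apply, aQ_apply]
      refine Finset.sum_congr rfl fun j _ => ?_
      by_cases hj : z0 j = 0
      · have hBw : B j (v t) w = 0 := by rw [hsymm, hw j hj]; simp
        simp [hBw]
      · have hcc : coefQ (stiffSeq z0 t) j = coefQ z0 j := by
          simp only [coefQ, stiffSeq, if_neg hj]
        rw [hcc]
    have hcont : Tendsto (fun t => aQ B z0 (v t) w) atTop (𝓝 (aQ B z0 vstar w)) := by
      have hcts : Continuous fun x : V => aQ B z0 x w := ((aQ B z0).flip w).continuous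
      exact (hcts.tendsto vstar).comp hvstar
    have : Tendsto (fun _ : ℕ => f w) atTop (𝓝 (f w)) := tendsto_const_nhds
    exact tendsto_nhds_unique (hcont.congr fun t => (hper t)) this
  have hsol_star : SolQ B f z0 vstar := ⟨hmem_star, heq_star⟩
  have : vstar = Phi B f z0 := solQ_unique hsymm hnonneg hsum f hz0 hsol_star hsol0
  have hfc : Tendsto (fun t => f (v t)) atTop (𝓝 (f vstar)) :=
    (f.continuous.tendsto vstar).comp hvstar
  rw [this] at hfc
  exact hfc

include hsymm hnonneg hsum in
lemma sol_continuous (f : V →L[ℝ] ℝ) {z0 : Fin d → ℝ} (hz00 : ∀ j, 0 ≤ z0 j)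
    (hz01 : ∀ j, z0 j ≤ 1) {α : Type*} {l : Filter α} (zf : α → Fin d → ℝ)
    (hbox : ∀ᶠ k in l, ∀ j, 0 ≤ zf k j ∧ zf k j ≤ 1)
    (hconv : Tendsto zf l (𝓝 z0)) :
    Tendsto (fun k => Phi B f (zf k)) l (𝓝 (Phi B f z0)) := by
  have hex0 : ∃ u, SolQ B f z0 u := exists_solQ hsymm hnonneg hsum f one_pos hz00 hz01
  have hsol0 := solQ_Phi hex0
  set u0 := Phi B f z0 with hu0def
  have hj : ∀ j, Tendsto (fun k => zf k j) l (𝓝 (z0 j)) := fun j => tendsto_pi_nhds.mp hconv j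
  rw [Metric.tendsto_nhds]
  intro ε hε
  set ε0 : ℝ := ε ^ 2 / 4 with hε0
  have hε0pos : 0 < ε0 := by positivity
  -- eventually positive off the stiff set
  have hS : ∀ᶠ k in l, ∀ j, z0 j ≠ 0 → 0 < zf k j := by
    rw [eventually_all]
    intro j
    by_cases h : z0 j = 0
    · exact Filter.Eventually.of_forall fun k hk => absurd h hk
    · have hpos : 0 < z0 j := lt_of_le_of_ne (hz00 j) (Ne.symm h)
      exact ((hj j).eventually (eventually_gt_nhds hpos)).mono fun k hk _ => hk
  -- convergence of the energy of u0
  have hA2 : Tendsto (fun k => aQ B (zf k) u0 u0) l (𝓝 (f u0)) := by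
    have htarget : aQ B z0 u0 u0 = f u0 := hsol0.2 u0 hsol0.1
    rw [← htarget]
    simp only [aQ_apply]
    refine tendsto_finset_sum _ fun j _ => ?_
    by_cases h : z0 j = 0
    · have hB0 : B j u0 u0 = 0 := by rw [hsol0.1 j h]; simp
      simp only [hB0, mul_zero]
      exact tendsto_const_nhds
    · have hpos : 0 < z0 j := lt_of_le_of_ne (hz00 j) (Ne.symm h)
      have hinv : Tendsto (fun k => (zf k j)⁻¹) l (𝓝 ((z0 j)⁻¹)) := (hj j).inv₀ h
      have heq : ∀ᶠ k in l, (fun k => (zf k j)⁻¹) k = (fun k => coefQ (zf k) j) k := by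
        filter_upwards [(hj j).eventually (eventually_gt_nhds hpos)] with k hk
        rw [coefQ, if_neg hk.ne']
      have hcoef : Tendsto (fun k => coefQ (zf k) j) l (𝓝 (coefQ z0 j)) := by
        rw [show coefQ z0 j = (z0 j)⁻¹ from if_neg h]
        exact hinv.congr' heq
      exact hcoef.mul_const _
  -- upper bound on the compliances via the stiff comparison
  have hstiff := stiff_limit hsymm hnonneg hsum f hz00 hz01
  set γ : ℕ → ℝ := fun t => f (Phi B f (stiffSeq z0 t)) with hγ
  have hexst : ∀ t : ℕ, ∃ u, SolQ B f (stiffSeq z0 t) u := fun t =>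
    exists_solQ hsymm hnonneg hsum f one_pos (fun j => (stiffSeq_pos hz00 t j).le)
      (fun j => stiffSeq_le_one hz01 t j)
  have hγn : ∀ t, 0 ≤ γ t := fun t =>
    compliance_nonneg hnonneg f (fun j => (stiffSeq_pos hz00 t j).le) (solQ_Phi (hexst t))
  obtain ⟨t0, ht0⟩ : ∃ t0, γ t0 < f u0 + ε0 / 2 :=
    (hstiff.eventually (eventually_lt_nhds (by linarith : f u0 < f u0 + ε0 / 2))).exists
  set δ : ℝ := ε0 / (2 * (γ t0 + 1)) with hδ
  have hγpos : (0:ℝ) < γ t0 + 1 := by linarith [hγn t0]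
  have hδpos : 0 < δ := by rw [hδ]; positivity
  set w : Fin d → ℝ := fun j => min ((1 + δ) * stiffSeq z0 t0 j) 1 with hw
  have hw0 : ∀ j, 0 ≤ w j := fun j =>
    le_min (mul_nonneg (by linarith) (stiffSeq_pos hz00 t0 j).le) zero_le_one
  have hw1 : ∀ j, w j ≤ 1 := fun j => min_le_right _ _
  have hexw : ∃ u, SolQ B f w u := exists_solQ hsymm hnonneg hsum f one_pos hw0 hw1
  have hsolw := solQ_Phi hexw
  have hwle : ∀ j, w j ≤ ((1 + δ) • stiffSeq z0 t0) j := by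
    intro j
    rw [Pi.smul_apply, smul_eq_mul]
    exact min_le_left _ _
  have hexs : ∃ u, SolQ B f ((1 + δ) • stiffSeq z0 t0) u := by
    refine exists_solQ hsymm hnonneg hsum f (C := 1 + δ) (by linarith) (fun j => ?_) (fun j => ?_)
    · rw [Pi.smul_apply, smul_eq_mul]
      exact mul_nonneg (by linarith) (stiffSeq_pos hz00 t0 j).le
    · rw [Pi.smul_apply, smul_eq_mul]
      have := stiffSeq_le_one hz01 t0 j
      nlinarith [hδpos, (stiffSeq_pos hz00 t0 j).le]
  have hsols := solQ_Phi hexs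
  have hsmul : SolQ B f ((1 + δ) • stiffSeq z0 t0) ((1 + δ) • Phi B f (stiffSeq z0 t0)) :=
    solQ_smul f (by linarith) (solQ_Phi (hexst t0))
  have heqs : Phi B f ((1 + δ) • stiffSeq z0 t0) = (1 + δ) • Phi B f (stiffSeq z0 t0) :=
    solQ_unique hsymm hnonneg hsum f
      (fun j => by
        rw [Pi.smul_apply, smul_eq_mul]
        exact mul_nonneg (by linarith) (stiffSeq_pos hz00 t0 j).le) hsols hsmul
  have hfw2 : f (Phi B f w) ≤ f u0 + ε0 := by
    have h1 : f (Phi B f w) ≤ f (Phi B f ((1 + δ) • stiffSeq z0 t0)) :=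
      compliance_mono hsymm hnonneg f hw0 hwle hsolw hsols
    rw [heqs, map_smul, smul_eq_mul] at h1
    have h3 : δ * (γ t0 + 1) = ε0 / 2 := by
      rw [hδ]; field_simp
    nlinarith [hδpos.le, hγn t0]
  -- eventual domination by w
  have hlt : ∀ j, z0 j < (1 + δ) * stiffSeq z0 t0 j := by
    intro j
    have hst := stiffSeq_pos hz00 t0 j
    by_cases h : z0 j = 0
    · rw [h]
      exact mul_pos (by linarith) hst
    · rw [stiffSeq, if_neg h]
      nlinarith [lt_of_le_of_ne (hz00 j) (Ne.symm h), hδpos]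
  have hdom : ∀ᶠ k in l, ∀ j, zf k j ≤ w j := by
    have hdom' : ∀ᶠ k in l, ∀ j, zf k j < (1 + δ) * stiffSeq z0 t0 j := by
      rw [eventually_all]
      intro j
      exact (hj j).eventually (eventually_lt_nhds (hlt j))
    filter_upwards [hbox, hdom'] with k hk1 hk2 j
    exact le_min (hk2 j).le (hk1 j).2
  have hfub : ∀ᶠ k in l, f (Phi B f (zf k)) ≤ f u0 + ε0 := by
    filter_upwards [hbox, hdom] with k hk1 hk2
    have hexk : ∃ u, SolQ B f (zf k) u :=
      exists_solQ hsymm hnonneg hsum f one_pos (fun j => (hk1 j).1) (fun j => (hk1 j).2)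
    exact le_trans
      (compliance_mono hsymm hnonneg f (fun j => (hk1 j).1) hk2 (solQ_Phi hexk) hsolw) hfw2
  have haev : ∀ᶠ k in l, aQ B (zf k) u0 u0 ≤ f u0 + ε0 :=
    (hA2.eventually (eventually_lt_nhds (lt_add_of_pos_right _ hε0pos))).mono
      fun k hk => hk.le
  filter_upwards [hbox, hS, hfub, haev] with k hk1 hk2 hk3 hk4
  have hexk : ∃ u, SolQ B f (zf k) u :=
    exists_solQ hsymm hnonneg hsum f one_pos (fun j => (hk1 j).1) (fun j => (hk1 j).2)
  have hsolk := solQ_Phi hexk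
  set uk := Phi B f (zf k) with hukdef
  have hu0mem : u0 ∈ VS B {j | zf k j = 0} := by
    intro j hj'
    simp only [Set.mem_setOf_eq] at hj'
    have hz0j : z0 j = 0 := by
      by_contra h
      exact absurd hj' (hk2 j h).ne'
    exact hsol0.1 j hz0j
  have hememb : uk - u0 ∈ VS B {j | zf k j = 0} := sub_mem hsolk.1 hu0mem
  have hcb := coercive_bound hnonneg hsum one_pos (fun j => (hk1 j).1)
    (fun j => (hk1 j).2) hememb
  rw [one_mul] at hcb
  have e1 : aQ B (zf k) uk uk = f uk := hsolk.2 uk hsolk.1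
  have e2 : aQ B (zf k) uk u0 = f u0 := hsolk.2 u0 hu0mem
  have e2' : aQ B (zf k) u0 uk = f u0 := by rw [aQ_symm hsymm]; exact e2
  have expand : aQ B (zf k) (uk - u0) (uk - u0)
      = aQ B (zf k) uk uk - aQ B (zf k) uk u0 - aQ B (zf k) u0 uk
        + aQ B (zf k) u0 u0 := by
    simp [map_sub, ContinuousLinearMap.sub_apply]
    ring
  rw [expand, e1, e2, e2'] at hcb
  have hsq : ‖uk - u0‖ ^ 2 ≤ 2 * ε0 := by linarith
  rw [dist_eq_norm]
  have hlt2 : ‖uk - u0‖ ^ 2 < ε ^ 2 := by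
    rw [hε0] at hsq
    nlinarith [hε]
  exact lt_of_pow_lt_pow_left₀ 2 hε.le hlt2

include hsymm hnonneg hsum in
lemma norm_lower_bound (f : V →L[ℝ] ℝ) (Wloc : Fin d → Submodule ℝ V)
    (hWloc : ∀ j : Fin d, ∀ v ∈ Wloc j, ∀ i : Fin d, i ≠ j → B i v = 0)
    {z : Fin d → ℝ} (hz0 : ∀ j, 0 ≤ z j) {j : Fin d} (hzj : z j = 1)
    {u : V} (hu : SolQ B f z u) : ‖f.comp (Wloc j).subtypeL‖ ≤ ‖u‖ := by
  refine ContinuousLinearMap.opNorm_le_bound _ (norm_nonneg u) fun v => ?_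
  have hvW : (v : V) ∈ Wloc j := v.2
  have hvmem : (v : V) ∈ VS B {i | z i = 0} := by
    intro i hi
    simp only [Set.mem_setOf_eq] at hi
    have hne : i ≠ j := fun h => by rw [h, hzj] at hi; norm_num at hi
    exact hWloc j v hvW i hne
  have heq := hu.2 (v : V) hvmem
  have hcollapse : aQ B z u (v : V) = B j u (v : V) := by
    rw [aQ_apply]
    rw [Finset.sum_eq_single j]
    · rw [coefQ, if_neg (by rw [hzj]; norm_num), hzj, inv_one, one_mul]
    · intro i _ hij
      have hB : B i u (v : V) = 0 := by
        rw [hsymm, hWloc j v hvW i hij]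
        simp
      simp [hB]
    · intro h; exact absurd (Finset.mem_univ j) h
  have hcs := cs hsymm hnonneg j u (v : V)
  have h1 : B j u u ≤ ‖u‖ ^ 2 := by
    rw [norm_sq_eq hsum]
    exact Finset.single_le_sum (fun i _ => hnonneg i u) (Finset.mem_univ j)
  have h2 : B j (v : V) (v : V) ≤ ‖(v : V)‖ ^ 2 := by
    rw [norm_sq_eq hsum]
    exact Finset.single_le_sum (fun i _ => hnonneg i (v : V)) (Finset.mem_univ j)
  have hsq : (f (v : V)) ^ 2 ≤ (‖u‖ * ‖(v : V)‖) ^ 2 := by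
    calc (f (v : V)) ^ 2 = (B j u (v : V)) ^ 2 := by rw [← heq, hcollapse]
      _ ≤ B j u u * B j (v : V) (v : V) := hcs
      _ ≤ ‖u‖ ^ 2 * ‖(v : V)‖ ^ 2 :=
          mul_le_mul h1 h2 (hnonneg j (v : V)) (by positivity)
      _ = (‖u‖ * ‖(v : V)‖) ^ 2 := by ring
  have habs : |f (v : V)| ≤ ‖u‖ * ‖(v : V)‖ := by
    have := Real.sqrt_le_sqrt hsq
    rwa [Real.sqrt_sq_eq_abs, Real.sqrt_sq (by positivity)] at this
  calc ‖(f.comp (Wloc j).subtypeL) v‖ = |f (v : V)| := by rfl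
    _ ≤ ‖u‖ * ‖(v : V)‖ := habs
    _ = ‖u‖ * ‖v‖ := rfl

end hyps

/-- a finite-dimensional subspace of an infinite-dimensional space can be enlarged
to any prescribed finite dimension. -/
lemma exists_superspace (hinf : ¬ FiniteDimensional ℝ V) :
    ∀ (n : ℕ) (W : Submodule ℝ V), FiniteDimensional ℝ W → Module.finrank ℝ W ≤ n →
      ∃ W' : Submodule ℝ V, W ≤ W' ∧ FiniteDimensional ℝ W' ∧ Module.finrank ℝ W' = n := by
  intro n
  induction n with
  | zero =>
    intro W hW hle
    exact ⟨W, le_rfl, hW, Nat.le_zero.mp hle⟩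
  | succ n ih =>
    intro W hW hle
    by_cases h : Module.finrank ℝ W = n + 1
    · exact ⟨W, le_rfl, hW, h⟩
    · have hle' : Module.finrank ℝ W ≤ n := by omega
      obtain ⟨W'', hW1, hW2, hW3⟩ := ih W hW hle'
      have hne : W'' ≠ ⊤ := by
        intro htop
        apply hinf
        haveI := hW2
        rw [htop] at hW2
        exact Module.Finite.equiv (Submodule.topEquiv (R := ℝ) (M := V))
      obtain ⟨v, hv⟩ : ∃ v : V, v ∉ W'' := by
        by_contra hcon
        push_neg at hcon
        exact hne (Submodule.eq_top_iff'.mpr hcon)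
      have hv0 : v ≠ 0 := fun h => hv (h ▸ W''.zero_mem)
      haveI := hW2
      have hinf0 : W'' ⊓ (Submodule.span ℝ {v}) = ⊥ := by
        rw [Submodule.eq_bot_iff]
        rintro x ⟨hx1, hx2⟩
        obtain ⟨a, rfl⟩ := Submodule.mem_span_singleton.mp hx2
        by_cases ha : a = 0
        · rw [ha, zero_smul]
        · exact absurd (by
            have : a⁻¹ • (a • v) ∈ W'' := Submodule.smul_mem _ _ hx1
            rwa [smul_smul, inv_mul_cancel₀ ha, one_smul] at this) hv
      refine ⟨W'' ⊔ Submodule.span ℝ {v}, le_trans hW1 le_sup_left, inferInstance, ?_⟩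
      have := Submodule.finrank_sup_add_finrank_inf_eq W'' (Submodule.span ℝ {v})
      rw [hinf0, finrank_bot, finrank_span_singleton hv0, hW3] at this
      omega

/-- the parameter box `[0,1]^d`. -/
def Zbox (d : ℕ) : Set (Fin d → ℝ) := {z | ∀ j, 0 ≤ z j ∧ z j ≤ 1}

/-- parameters in the box with at least one entry equal to `1`. -/
def Zone (d : ℕ) : Set (Fin d → ℝ) := {z ∈ Zbox d | ∃ j, z j = 1}

lemma isCompact_Zone {d : ℕ} : IsCompact (Zone d) := by
  have h1 : Zbox d = Set.pi Set.univ (fun _ : Fin d => Set.Icc (0:ℝ) 1) := by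
    ext z
    simp only [Zbox, Set.mem_setOf_eq, Set.mem_univ_pi, Set.mem_Icc]
  have h2 : IsCompact (Zbox d) := by
    rw [h1]
    exact isCompact_univ_pi fun _ => isCompact_Icc
  have h3 : IsClosed {z : Fin d → ℝ | ∃ j, z j = 1} := by
    have : {z : Fin d → ℝ | ∃ j, z j = 1} = ⋃ j : Fin d, (fun z : Fin d → ℝ => z j) ⁻¹' {1} := by
      ext z; simp
    rw [this]
    exact isClosed_iUnion_of_finite fun j => IsClosed.preimage (continuous_apply j) isClosed_singleton
  have : Zone d = Zbox d ∩ {z | ∃ j, z j = 1} := rfl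
  rw [this]
  exact h2.inter_right h3

section hyps2
variable {B : Fin d → V →L[ℝ] V →L[ℝ] ℝ}
  (hsymm : ∀ (j : Fin d) (v w : V), B j v w = B j w v)
  (hnonneg : ∀ (j : Fin d) (v : V), 0 ≤ B j v v)
  (hsum : ∀ v w : V, ∑ j, B j v w = ⟪v, w⟫_ℝ)

include hsymm hnonneg hsum in
lemma continuousOn_Phi (f : V →L[ℝ] ℝ) : ContinuousOn (Phi B f) (Zbox d) := by
  intro z0 hz0
  have := sol_continuous hsymm hnonneg hsum f (fun j => (hz0 j).1) (fun j => (hz0 j).2)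
    (l := nhdsWithin z0 (Zbox d)) (zf := fun z => z)
    (by
      have := self_mem_nhdsWithin (a := z0) (s := Zbox d)
      exact Filter.eventually_iff_exists_mem.mpr ⟨Zbox d, this, fun k hk => hk⟩)
    (tendsto_id.mono_left nhdsWithin_le_nhds)
  exact this

include hsymm hnonneg hsum in
lemma isCompact_normalized_manifold (f : V →L[ℝ] ℝ)
    (Wloc : Fin d → Submodule ℝ V)
    (hWloc : ∀ j : Fin d, ∀ v ∈ Wloc j, ∀ i : Fin d, i ≠ j → B i v = 0)
    (hcf : 0 < ⨅ j : Fin d, ‖f.comp (Wloc j).subtypeL‖) (hd : 0 < d) :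
    IsCompact ((fun x : V => ‖x‖⁻¹ • x) '' (Phi B f '' Zone d)) := by
  have hM : IsCompact (Phi B f '' Zone d) :=
    isCompact_Zone.image_of_continuousOn
      ((continuousOn_Phi hsymm hnonneg hsum f).mono fun z hz => hz.1)
  refine hM.image_of_continuousOn ?_
  intro x hx
  obtain ⟨z, hz, rfl⟩ := hx
  haveI : Nonempty (Fin d) := ⟨⟨0, hd⟩⟩
  -- the norm is bounded below by c_f > 0
  obtain ⟨j, hj⟩ := hz.2
  have hsol : SolQ B f z (Phi B f z) := solQ_Phi
    (exists_solQ hsymm hnonneg hsum f one_pos (fun i => (hz.1 i).1) (fun i => (hz.1 i).2))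
  have hlow := norm_lower_bound hsymm hnonneg hsum f Wloc hWloc (fun i => (hz.1 i).1) hj hsol
  have hbdd : BddBelow (Set.range fun j : Fin d => ‖f.comp (Wloc j).subtypeL‖) :=
    ⟨0, by rintro x ⟨i, rfl⟩; exact norm_nonneg (f.comp (Wloc i).subtypeL)⟩
  have hcle : (⨅ i : Fin d, ‖f.comp (Wloc i).subtypeL‖) ≤ ‖Phi B f z‖ :=
    le_trans (ciInf_le hbdd j) hlow
  have hne : Phi B f z ≠ 0 := by
    intro h0
    rw [h0, norm_zero] at hcle
    exact absurd (lt_of_lt_of_le hcf hcle) (lt_irrefl 0)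
  have hct : ContinuousAt (fun x : V => ‖x‖⁻¹ • x) (Phi B f z) :=
    ((continuous_norm.continuousAt).inv₀ (norm_ne_zero_iff.mpr hne)).smul continuousAt_id
  exact hct.continuousWithinAt

end hyps2
end S4Aux

/-- optimality of the orthogonal projection -/
lemma orthProj_opt {V : Type*} [NormedAddCommGroup V] [InnerProductSpace ℝ V]
    {K : Submodule ℝ V} {u p : V} (h : IsOrthProj K u p) {w : V} (hw : w ∈ K) :
    ‖u - p‖ ≤ ‖u - w‖ := by
  have h2 : ⟪u - p, p - w⟫_ℝ = 0 := h.2 _ (sub_mem h.1 hw)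
  have hexp : ‖u - w‖ ^ 2 = ‖u - p‖ ^ 2 + 2 * ⟪u - p, p - w⟫_ℝ + ‖p - w‖ ^ 2 := by
    have hsplit : u - w = (u - p) + (p - w) := by abel
    rw [hsplit, norm_add_sq_real]
  rw [h2] at hexp
  have hle : ‖u - p‖ ^ 2 ≤ ‖u - w‖ ^ 2 := by nlinarith [sq_nonneg ‖p - w‖]
  have := Real.sqrt_le_sqrt hle
  rwa [Real.sqrt_sq (norm_nonneg _), Real.sqrt_sq (norm_nonneg _)] at this


/-- Theorem 2.5: under `c_f > 0` there exist `n`-dimensional reduced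
spaces `V_n` achieving uniform approximation in relative error over all of `(0,∞]^d`. -/
theorem statement4
    {V : Type*} [NormedAddCommGroup V] [InnerProductSpace ℝ V] [CompleteSpace V]
    {d : ℕ}
    (hd : 0 < d)
    (B : Fin d → V →L[ℝ] V →L[ℝ] ℝ)
    (hsymm : ∀ (j : Fin d) (v w : V), B j v w = B j w v)
    (hnonneg : ∀ (j : Fin d) (v : V), 0 ≤ B j v v)
    (hsum : ∀ v w : V, ∑ j, B j v w = ⟪v, w⟫_ℝ)
    (f : V →L[ℝ] ℝ)
    (Wloc : Fin d → Submodule ℝ V)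
    (hWloc : ∀ j : Fin d, ∀ v ∈ Wloc j, ∀ i : Fin d, i ≠ j → B i v = 0)
    (hcf : 0 < ⨅ j : Fin d, ‖f.comp (Wloc j).subtypeL‖)
    (hinf : ¬ FiniteDimensional ℝ V) :
    ∃ (Vn : ℕ → Submodule ℝ V) (ε : ℕ → ℝ),
      (∀ n, FiniteDimensional ℝ (Vn n) ∧ Module.finrank ℝ (Vn n) = n) ∧
      Tendsto ε atTop (nhds 0) ∧
      ∀ (n : ℕ) (y : Fin d → ℝ≥0∞), (∀ j, 0 < y j) →
        ∀ u : V, IsSolE B f y u → ∀ p : V, IsOrthProj (Vn n) u p →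
          ‖u - p‖ ≤ ε n * ‖u‖ := by
  classical
  haveI : Nonempty (Fin d) := ⟨⟨0, hd⟩⟩
  set ν : V → V := fun x => ‖x‖⁻¹ • x with hν
  set K : Set V := ν '' (S4Aux.Phi B f '' S4Aux.Zone d) with hK
  have hKcompact : IsCompact K :=
    S4Aux.isCompact_normalized_manifold hsymm hnonneg hsum f Wloc hWloc hcf hd
  have hnets : ∀ m : ℕ, ∃ t : Finset V,
      K ⊆ ⋃ q ∈ t, Metric.ball q (((m : ℝ) + 1))⁻¹ := by
    intro m
    obtain ⟨t, htfin, hcov⟩ := Metric.totallyBounded_iff.mp hKcompact.totallyBounded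
      (((m : ℝ) + 1))⁻¹ (by positivity)
    refine ⟨htfin.toFinset, fun x hx => ?_⟩
    obtain ⟨q, hq, hxq⟩ := Set.mem_iUnion₂.mp (hcov hx)
    exact Set.mem_iUnion₂.mpr ⟨q, htfin.mem_toFinset.mpr hq, hxq⟩
  choose T hT using hnets
  set N : ℕ → Finset V := fun m => if m = 0 then ∅ else T m with hNdef
  set D : ℕ → ℕ := fun m => Module.finrank ℝ (Submodule.span ℝ ((N m : Set V))) with hDdef
  set g : ℕ → ℕ := fun m => m + ∑ i ∈ Finset.range (m + 1), D i with hgdef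
  have hg0 : g 0 = 0 := by
    simp [hgdef, hDdef, hNdef]
  have hgm : ∀ m, m ≤ g m := fun m => Nat.le_add_right _ _
  have hDg : ∀ m, D m ≤ g m :=
    fun m => le_trans (Finset.single_le_sum (f := D) (fun i _ => Nat.zero_le _)
      (Finset.self_mem_range_succ m)) (Nat.le_add_left _ _)
  set Mn : ℕ → ℕ := fun n => Nat.findGreatest (fun m => g m ≤ n) n with hMndef
  have hPMn : ∀ n, g (Mn n) ≤ n := fun n =>
    Nat.findGreatest_spec (P := fun m => g m ≤ n) (Nat.zero_le n)
      (by show g 0 ≤ n; rw [hg0]; exact Nat.zero_le n)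
  have hVnex : ∀ n, ∃ W' : Submodule ℝ V,
      Submodule.span ℝ ((N (Mn n) : Set V)) ≤ W' ∧ FiniteDimensional ℝ W' ∧
        Module.finrank ℝ W' = n := by
    intro n
    refine S4Aux.exists_superspace hinf n _ inferInstance ?_
    calc Module.finrank ℝ (Submodule.span ℝ ((N (Mn n) : Set V))) = D (Mn n) := rfl
      _ ≤ g (Mn n) := hDg _
      _ ≤ n := hPMn n
  choose Vn hVn1 hVn2 hVn3 using hVnex
  set ε : ℕ → ℝ := fun n => if Mn n = 0 then 1 else ((Mn n : ℝ))⁻¹ with hεdef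
  refine ⟨Vn, ε, fun n => ⟨hVn2 n, hVn3 n⟩, ?_, ?_⟩
  · -- ε → 0
    rw [Metric.tendsto_atTop]
    intro η hη
    obtain ⟨m₀, hm₀⟩ := exists_nat_gt (η⁻¹)
    have hm₀pos : 0 < m₀ := by
      by_contra h
      push_neg at h
      interval_cases m₀
      simp only [Nat.cast_zero] at hm₀
      exact absurd hm₀ (not_lt.mpr (inv_nonneg.mpr hη.le))
    refine ⟨g m₀, fun n hn => ?_⟩
    have h1 : m₀ ≤ Mn n := Nat.le_findGreatest (le_trans (hgm m₀) hn) hn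
    have hMn0 : Mn n ≠ 0 := by omega
    have hMnpos : (0:ℝ) < (Mn n : ℝ) := by exact_mod_cast Nat.pos_of_ne_zero hMn0
    have hm₀r : (0:ℝ) < (m₀ : ℝ) := by exact_mod_cast hm₀pos
    rw [Real.dist_eq, sub_zero, hεdef]
    simp only [if_neg hMn0]
    rw [abs_of_pos (inv_pos.mpr hMnpos)]
    have hlt : (m₀ : ℝ)⁻¹ < η := by
      rw [inv_lt_comm₀ hm₀r hη]
      exact hm₀
    have hle : ((Mn n : ℝ))⁻¹ ≤ (m₀ : ℝ)⁻¹ :=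
      inv_anti₀ hm₀r (by exact_mod_cast h1)
    exact lt_of_le_of_lt hle hlt
  · -- the main bound
    intro n y hy u husol p hproj
    by_cases hall : ∀ j, y j = ∞
    · -- all entries infinite: u = 0 and p = 0
      have hu0 : u = 0 := by
        have hm : ∀ j : Fin d, B j u = 0 := fun j => husol.1 j (hall j)
        have hsq : ‖u‖ ^ 2 = 0 := by
          rw [S4Aux.norm_sq_eq hsum u]
          exact Finset.sum_eq_zero fun j _ => by rw [hm j]; simp
        exact norm_eq_zero.mp (pow_eq_zero_iff two_ne_zero |>.mp hsq)
      have hp0 : p = 0 := by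
        have h2 := hproj.2 p hproj.1
        rw [hu0, zero_sub, inner_neg_left] at h2
        have h3 : ⟪p, p⟫_ℝ = 0 := by linarith
        exact inner_self_eq_zero.mp h3
      rw [hu0, hp0, sub_zero, norm_zero, mul_zero]
    · push_neg at hall
      obtain ⟨j₀, hj₀⟩ := hall
      set F : Finset (Fin d) := Finset.univ.filter (fun j => y j ≠ ∞) with hFdef
      have hFne : F.Nonempty := ⟨j₀, by simp [hFdef, hj₀]⟩
      set lam : ℝ := F.inf' hFne (fun j => (y j).toReal) with hlamdef
      have hlampos : 0 < lam := by
        rw [hlamdef, Finset.lt_inf'_iff]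
        intro j hj
        rw [hFdef, Finset.mem_filter] at hj
        exact ENNReal.toReal_pos (hy j).ne' hj.2
      set z : Fin d → ℝ := fun j => if y j = ∞ then 0 else lam / (y j).toReal with hzdef
      have hzbox : ∀ j, 0 ≤ z j ∧ z j ≤ 1 := by
        intro j
        rw [hzdef]
        by_cases h : y j = ∞
        · simp [h]
        · simp only [if_neg h]
          have ht : 0 < (y j).toReal := ENNReal.toReal_pos (hy j).ne' h
          refine ⟨by positivity, ?_⟩
          rw [div_le_one ht]
          exact Finset.inf'_le _ (by simp [hFdef, h])
      have hzone : z ∈ S4Aux.Zone d := by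
        refine ⟨hzbox, ?_⟩
        obtain ⟨j1, hj1mem, hj1⟩ := F.exists_mem_eq_inf' hFne (fun j => (y j).toReal)
        have hj1i : y j1 ≠ ∞ := (Finset.mem_filter.mp hj1mem).2
        refine ⟨j1, ?_⟩
        have hlameq : lam = (y j1).toReal := hj1
        rw [hzdef]
        simp only [if_neg hj1i]
        rw [hlameq]
        exact div_self (ENNReal.toReal_pos (hy j1).ne' hj1i).ne'
      have hSeq : {j | z j = 0} = {j | y j = ∞} := by
        ext j
        simp only [Set.mem_setOf_eq, hzdef]
        by_cases h : y j = ∞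
        · simp [h]
        · simp only [if_neg h]
          have ht : 0 < (y j).toReal := ENNReal.toReal_pos (hy j).ne' h
          exact ⟨fun h0 => absurd h0 (div_ne_zero hlampos.ne' ht.ne'),
            fun h' => absurd h' h⟩
      have hsolz : S4Aux.SolQ B f z (lam • u) := by
        constructor
        · show lam • u ∈ VS B {j | z j = 0}
          rw [hSeq]
          exact Submodule.smul_mem _ _ husol.1
        · intro v hv
          rw [hSeq] at hv
          have heqv := husol.2 v hv
          rw [S4Aux.aQ_apply, ← heqv]
          refine Finset.sum_congr rfl fun j _ => ?_
          by_cases h : y j = ∞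
          · have hz0 : z j = 0 := by rw [hzdef]; simp [h]
            simp only [S4Aux.coefQ, if_pos hz0, h]
            simp
          · have ht : 0 < (y j).toReal := ENNReal.toReal_pos (hy j).ne' h
            have hzj : z j = lam / (y j).toReal := by rw [hzdef]; simp [h]
            have hzne : z j ≠ 0 := by
              rw [hzj]; exact div_ne_zero hlampos.ne' ht.ne'
            have hBs : B j (lam • u) v = lam * B j u v := by
              rw [map_smul]
              simp [smul_eq_mul]
            simp only [S4Aux.coefQ, if_neg hzne, hzj, hBs, inv_div]
            field_simp [hlampos.ne']
            rw [mul_zero, if_neg hlampos.ne', mul_div_assoc', mul_comm lam, mul_div_assoc, div_self hlampos.ne', mul_one]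
      have hexz : ∃ w, S4Aux.SolQ B f z w :=
        S4Aux.exists_solQ hsymm hnonneg hsum f one_pos (fun j => (hzbox j).1)
          (fun j => (hzbox j).2)
      have huPhi : lam • u = S4Aux.Phi B f z :=
        S4Aux.solQ_unique hsymm hnonneg hsum f (fun j => (hzbox j).1) hsolz
          (S4Aux.solQ_Phi hexz)
      obtain ⟨j1, hj1⟩ := hzone.2
      have hlow := S4Aux.norm_lower_bound hsymm hnonneg hsum f Wloc hWloc
        (fun i => (hzbox i).1) hj1 hsolz
      have hbdd : BddBelow (Set.range fun j : Fin d => ‖f.comp (Wloc j).subtypeL‖) :=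
        ⟨0, by rintro x ⟨i, rfl⟩; exact norm_nonneg (f.comp (Wloc i).subtypeL)⟩
      have hcfle : (⨅ i : Fin d, ‖f.comp (Wloc i).subtypeL‖) ≤ ‖lam • u‖ :=
        le_trans (ciInf_le hbdd j1) hlow
      have hune : u ≠ 0 := by
        intro h0
        rw [h0, smul_zero, norm_zero] at hcfle
        exact absurd (lt_of_lt_of_le hcf hcfle) (lt_irrefl 0)
      have hunorm : 0 < ‖u‖ := norm_pos_iff.mpr hune
      have hxK : ‖u‖⁻¹ • u ∈ K := by
        refine ⟨S4Aux.Phi B f z, ⟨z, hzone, rfl⟩, ?_⟩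
        rw [← huPhi, hν]
        show ‖lam • u‖⁻¹ • (lam • u) = ‖u‖⁻¹ • u
        rw [norm_smul, Real.norm_eq_abs, abs_of_pos hlampos, smul_smul]
        congr 1
        field_simp
      by_cases hMn0 : Mn n = 0
      · have hε1 : ε n = 1 := by rw [hεdef]; simp [hMn0]
        rw [hε1, one_mul]
        calc ‖u - p‖ ≤ ‖u - 0‖ := orthProj_opt hproj (zero_mem _)
          _ = ‖u‖ := by rw [sub_zero]
      · have hε2 : ε n = ((Mn n : ℝ))⁻¹ := by rw [hεdef]; simp [hMn0]
        have hMpos : (0:ℝ) < (Mn n : ℝ) := by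
          exact_mod_cast Nat.pos_of_ne_zero hMn0
        have hNn : N (Mn n) = T (Mn n) := by rw [hNdef]; simp [hMn0]
        obtain ⟨q, hq, hxq⟩ := Set.mem_iUnion₂.mp (hT (Mn n) hxK)
        rw [Metric.mem_ball] at hxq
        have hqVn : q ∈ Vn n := hVn1 n (Submodule.subset_span (by
          rw [hNn]
          exact Finset.mem_coe.mpr hq))
        set w : V := ‖u‖ • q with hwdef
        have hwVn : w ∈ Vn n := Submodule.smul_mem _ _ hqVn
        have hsub : u - w = ‖u‖ • ((‖u‖⁻¹ • u) - q) := by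
          rw [smul_sub, smul_smul, mul_inv_cancel₀ hunorm.ne', one_smul, hwdef]
        have hdist : ‖u - w‖ = ‖u‖ * ‖(‖u‖⁻¹ • u) - q‖ := by
          rw [hsub, norm_smul, Real.norm_eq_abs, abs_of_pos hunorm]
        have hqle : ‖(‖u‖⁻¹ • u) - q‖ ≤ ((Mn n : ℝ))⁻¹ := by
          have h1 : ((Mn n : ℝ) + 1)⁻¹ ≤ ((Mn n : ℝ))⁻¹ :=
            inv_anti₀ hMpos (by linarith)
          calc ‖(‖u‖⁻¹ • u) - q‖ = dist (‖u‖⁻¹ • u) q := (dist_eq_norm _ _).symm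
            _ ≤ ((Mn n : ℝ) + 1)⁻¹ := hxq.le
            _ ≤ _ := h1
        calc ‖u - p‖ ≤ ‖u - w‖ := orthProj_opt hproj hwVn
          _ = ‖u‖ * ‖(‖u‖⁻¹ • u) - q‖ := hdist
          _ ≤ ‖u‖ * ((Mn n : ℝ))⁻¹ := mul_le_mul_of_nonneg_left hqle hunorm.le
          _ = ε n * ‖u‖ := by rw [hε2]; ring


end
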